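/- Let Y be a finite simple graph on vertex set {1,…,n} and let σ, τ be permutations of {1,…,n} that differ by a transposition of two adjacent positions i, i+1 such that {σ(i), σ(i+1)} is not an edge of Y. Then for any family of Y-local functions f_1,…,f_n : X^n → X^n, the sequential compositions satisfy Φ_σ = Φ_τ. -/

import Mathlib

/-- `fv` is a `Y`-local function for vertex `v`: it changes only coordinate `v`,
and its value at `v` depends only on the closed neighborhood of `v` in `Y`. -/
def IsYLocal {X : Type*} {n : ℕ} (Y : SimpleGraph (Fin n)) (v : Fin n)
    (fv : (Fin n → X) → (Fin n → X)) : Prop :=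
  (∀ x w, w ≠ v → fv x w = x w) ∧
  (∀ x y, (∀ w, (w = v ∨ Y.Adj v w) → x w = y w) → fv x v = fv y v)

/-- Sequential composition `f_{π(n)} ∘ ⋯ ∘ f_{π(1)}`. -/
def seqComp {X : Type*} {n : ℕ} (f : Fin n → ((Fin n → X) → (Fin n → X)))
    (π : Equiv.Perm (Fin n)) : (Fin n → X) → (Fin n → X) :=
  fun x => (List.ofFn fun i => f (π i)).foldl (fun s g => g s) x

/-- Non-adjacent local functions commute. -/
lemma local_commute {X : Type*} {n : ℕ} (Y : SimpleGraph (Fin n))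
    (f : Fin n → ((Fin n → X) → (Fin n → X)))
    (hloc : ∀ v, IsYLocal Y v (f v)) (u v : Fin n) (huv : u ≠ v)
    (h : ¬ Y.Adj u v) (x : Fin n → X) : f u (f v x) = f v (f u x) := by
  obtain ⟨h1u, h2u⟩ := hloc u
  obtain ⟨h1v, h2v⟩ := hloc v
  have h' : ¬ Y.Adj v u := fun hh => h hh.symm
  funext w
  by_cases hwu : w = u
  · subst hwu
    rw [h1v _ _ huv]
    exact h2u (f v x) x fun w' hw' => h1v x w' (by
      rintro rfl
      rcases hw' with rfl | hw'
      · exact huv rfl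
      · exact h hw')
  · by_cases hwv : w = v
    · subst hwv
      rw [h1u _ _ (Ne.symm huv)]
      exact (h2v (f u x) x fun w' hw' => h1u x w' (by
        rintro rfl
        rcases hw' with rfl | hw'
        · exact huv rfl
        · exact h' hw')).symm
    · rw [h1u _ _ hwu, h1v _ _ hwv, h1v _ _ hwv, h1u _ _ hwu]

theorem adjacent_transposition_same_sds {X : Type*} [Fintype X] {n : ℕ}
    (Y : SimpleGraph (Fin n)) (f : Fin n → ((Fin n → X) → (Fin n → X)))
    (hloc : ∀ v, IsYLocal Y v (f v))
    (σ τ : Equiv.Perm (Fin n)) (i j : Fin n) (hij : (j : ℕ) = (i : ℕ) + 1)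
    (hτ : τ = σ * Equiv.swap i j) (hadj : ¬ Y.Adj (σ i) (σ j)) :
    seqComp f σ = seqComp f τ := by
  subst hτ
  have hijne : i ≠ j := by intro hh; rw [hh] at hij; omega
  have hne : σ i ≠ σ j := fun hh => hijne (σ.injective hh)
  have hmn : (i : ℕ) + 1 < n := hij ▸ j.isLt
  set m : ℕ := (i : ℕ) with hm
  set l1 : List ((Fin n → X) → (Fin n → X)) := List.ofFn (fun k => f (σ k)) with hl1
  set l2 : List ((Fin n → X) → (Fin n → X)) :=
    List.ofFn (fun k => f ((σ * Equiv.swap i j) k)) with hl2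
  have hlen1 : l1.length = n := by simp [hl1]
  have hlen2 : l2.length = n := by simp [hl2]
  have he1 : ∀ (k : ℕ) (hk : k < n), l1[k]'(by omega) = f (σ ⟨k, hk⟩) := by
    intro k hk
    exact List.getElem_ofFn _
  have he2 : ∀ (k : ℕ) (hk : k < n), l2[k]'(by omega) = f (σ (Equiv.swap i j ⟨k, hk⟩)) := by
    intro k hk
    exact List.getElem_ofFn _
  have key : ∀ (l : List ((Fin n → X) → (Fin n → X))) (hl : l.length = n),
      l = l.take m ++ l[m]'(by omega) :: l[m + 1]'(by omega) :: l.drop (m + 2) := by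
    intro l hl
    conv_lhs => rw [← List.take_append_drop m l]
    congr 1
    rw [List.drop_eq_getElem_cons (by omega)]
    congr 1
    rw [List.drop_eq_getElem_cons (by omega)]
  -- identify the four entries
  have e1m : l1[m]'(by omega) = f (σ i) := he1 m (by omega)
  have e1m1 : l1[m + 1]'(by omega) = f (σ j) := by
    have hmj : (⟨m + 1, by omega⟩ : Fin n) = j := Fin.ext (show m + 1 = (j : ℕ) by omega)
    rw [he1 (m + 1) (by omega), hmj]
  have e2m : l2[m]'(by omega) = f (σ j) := by
    rw [he2 m (by omega)]
    have : (⟨m, by omega⟩ : Fin n) = i := Fin.ext rfl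
    rw [this, Equiv.swap_apply_left]
  have e2m1 : l2[m + 1]'(by omega) = f (σ i) := by
    rw [he2 (m + 1) (by omega)]
    have : (⟨m + 1, by omega⟩ : Fin n) = j := Fin.ext (show m + 1 = (j : ℕ) by omega)
    rw [this, Equiv.swap_apply_right]
  -- take and drop parts agree
  have htake : l2.take m = l1.take m := by
    apply List.ext_getElem
    · simp [hlen1, hlen2]
    · intro k h1 h2
      have hk : k < m := by simp [hlen2] at h1; omega
      rw [List.getElem_take, List.getElem_take, he2 k (by omega), he1 k (by omega)]
      rw [Equiv.swap_apply_of_ne_of_ne]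
      · exact Fin.ne_of_val_ne (show k ≠ m by omega)
      · exact Fin.ne_of_val_ne (show k ≠ (j : ℕ) by omega)
  have hdrop : l2.drop (m + 2) = l1.drop (m + 2) := by
    apply List.ext_getElem
    · simp [hlen1, hlen2]
    · intro k h1 h2
      have hk : m + 2 + k < n := by simp [hlen2] at h1; omega
      rw [List.getElem_drop, List.getElem_drop, he2 _ hk, he1 _ hk]
      rw [Equiv.swap_apply_of_ne_of_ne]
      · exact Fin.ne_of_val_ne (show m + 2 + k ≠ m by omega)
      · exact Fin.ne_of_val_ne (show m + 2 + k ≠ (j : ℕ) by omega)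
  have hd1 : l1 = l1.take m ++ f (σ i) :: f (σ j) :: l1.drop (m + 2) := by
    conv_lhs => rw [key l1 hlen1]
    rw [e1m, e1m1]
  have hd2 : l2 = l1.take m ++ f (σ j) :: f (σ i) :: l1.drop (m + 2) := by
    conv_lhs => rw [key l2 hlen2]
    rw [e2m, e2m1, htake, hdrop]
  funext x
  show l1.foldl (fun s g => g s) x = l2.foldl (fun s g => g s) x
  rw [hd2]
  conv_lhs => rw [hd1]
  rw [List.foldl_append, List.foldl_append]
  simp only [List.foldl_cons]
  rw [local_commute Y f hloc (σ j) (σ i) hne.symm (fun hh => hadj hh.symm)]
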